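/- arXiv:2405.07271 — 2 statements merged into one kernel-verified Lean document; each statement's English description precedes it below -/
import Mathlib

section
/- Every S-Noetherian commutative ring is S-coherent. -/
open Function LinearMap

/-- A module `M` is `S`-finite: there is a f.g. submodule `N₀` and `s ∈ S` with `s • M ⊆ N₀`. -/
def SFiniteMod (R : Type*) [CommRing R] (S : Submonoid R)
    (M : Type*) [AddCommGroup M] [Module R M] : Prop :=
  ∃ N₀ : Submodule R M, N₀.FG ∧ ∃ s ∈ S, ∀ m : M, s • m ∈ N₀

/-- A module `M` is `S`-finitely presented: there is an exact sequence
`0 → K → F → M → 0` with `F` finitely generated free and `K` `S`-finite. -/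
def SFinitePres (R : Type*) [CommRing R] (S : Submonoid R)
    (M : Type*) [AddCommGroup M] [Module R M] : Prop :=
  ∃ (n : ℕ) (f : (Fin n → R) →ₗ[R] M), Function.Surjective f ∧
    ∃ K₀ : Submodule R (Fin n → R), K₀.FG ∧ K₀ ≤ LinearMap.ker f ∧
      ∃ s ∈ S, ∀ x ∈ LinearMap.ker f, s • x ∈ K₀

/-- An ideal `I` is `S`-finite. -/
def SFiniteIdeal (R : Type*) [CommRing R] (S : Submonoid R) (I : Ideal R) : Prop :=
  ∃ J : Ideal R, J.FG ∧ J ≤ I ∧ ∃ s ∈ S, ∀ x ∈ I, s * x ∈ J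

/-- `R` is an `S`-coherent ring: every finitely generated ideal is `S`-finitely presented. -/
def SCoherentRing (R : Type*) [CommRing R] (S : Submonoid R) : Prop :=
  ∀ I : Ideal R, I.FG → SFinitePres R S ↥I

/-- `M` is an `S`-coherent module: finitely generated and every finitely generated
submodule is `S`-finitely presented. -/
def SCoherentMod (R : Type*) [CommRing R] (S : Submonoid R)
    (M : Type*) [AddCommGroup M] [Module R M] : Prop :=
  Module.Finite R M ∧ ∀ N : Submodule R M, N.FG → SFinitePres R S ↥N

section Aux

variable {R : Type*} [CommRing R] (S : Submonoid R)

/-- Auxiliary: a submodule `N` is `S`-finite. -/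
def SFinSub {M : Type*} [AddCommGroup M] [Module R M] (N : Submodule R M) : Prop :=
  ∃ N₀ : Submodule R M, N₀.FG ∧ N₀ ≤ N ∧ ∃ s ∈ S, ∀ x ∈ N, s • x ∈ N₀

variable {S}

lemma SFinSub.map {M M' : Type*} [AddCommGroup M] [Module R M]
    [AddCommGroup M'] [Module R M'] (f : M →ₗ[R] M') {N : Submodule R M}
    (hN : SFinSub S N) : SFinSub S (N.map f) := by
  obtain ⟨N₀, hfg, hle, s, hs, hN₀⟩ := hN
  refine ⟨N₀.map f, hfg.map f, Submodule.map_mono hle, s, hs, ?_⟩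
  rintro y ⟨x, hx, rfl⟩
  exact ⟨s • x, hN₀ x hx, map_smul f s x⟩

lemma SFinSub.of_map_of_inf_ker {M M' : Type*} [AddCommGroup M] [Module R M]
    [AddCommGroup M'] [Module R M'] (f : M →ₗ[R] M') {N : Submodule R M}
    (h1 : SFinSub S (N.map f)) (h2 : SFinSub S (N ⊓ LinearMap.ker f)) :
    SFinSub S N := by
  obtain ⟨P₀, ⟨T, hT⟩, hPle, s₁, hs₁, hP⟩ := h1
  obtain ⟨Q₀, hQfg, hQle, s₂, hs₂, hQ⟩ := h2
  -- choose lifts of the generators of P₀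
  have hmem : ∀ t : T, (t : M') ∈ N.map f := fun t =>
    hPle (hT ▸ Submodule.subset_span t.2)
  choose σ hσN hσf using fun t : T => hmem t
  set N₁ : Submodule R M := Submodule.span R (Set.range σ) with hN₁
  have hN₁le : N₁ ≤ N := Submodule.span_le.2 (by rintro _ ⟨t, rfl⟩; exact hσN t)
  have hmapN₁ : P₀ ≤ N₁.map f := by
    rw [← hT, Submodule.span_le]
    intro t ht
    exact ⟨σ ⟨t, ht⟩, Submodule.subset_span ⟨⟨t, ht⟩, rfl⟩, hσf ⟨t, ht⟩⟩
  refine ⟨N₁ ⊔ Q₀, Submodule.FG.sup (Submodule.fg_span (Set.finite_range σ)) hQfg,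
    sup_le hN₁le (hQle.trans inf_le_left), s₂ * s₁, S.mul_mem hs₂ hs₁, ?_⟩
  intro x hx
  obtain ⟨y, hyN₁, hyf⟩ := hmapN₁ (hP (f x) ⟨x, hx, rfl⟩)
  have hz : s₁ • x - y ∈ N ⊓ LinearMap.ker f := by
    refine ⟨sub_mem (Submodule.smul_mem N s₁ hx) (hN₁le hyN₁), ?_⟩
    simp [LinearMap.mem_ker, map_sub, hyf]
  have h2z := hQ _ hz
  have : (s₂ * s₁) • x = s₂ • y + s₂ • (s₁ • x - y) := by
    rw [smul_sub, mul_smul]; abel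
  rw [this]
  exact Submodule.add_mem _ (Submodule.mem_sup_left (Submodule.smul_mem _ _ hyN₁))
    (Submodule.mem_sup_right h2z)

/-- `Fin.cons 0` as a linear map. -/
def consZeroLM (R : Type*) [CommRing R] (n : ℕ) :
    (Fin n → R) →ₗ[R] (Fin (n + 1) → R) where
  toFun x := Fin.cons 0 x
  map_add' x y := by
    ext i
    refine Fin.cases ?_ (fun j => ?_) i <;> simp
  map_smul' r x := by
    ext i
    refine Fin.cases ?_ (fun j => ?_) i <;> simp

lemma sfinsub_pi (h : ∀ I : Ideal R, SFiniteIdeal R S I) :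
    ∀ (n : ℕ) (N : Submodule R (Fin n → R)), SFinSub S N := by
  intro n
  induction n with
  | zero =>
    intro N
    refine ⟨⊥, Submodule.fg_bot, bot_le, 1, S.one_mem, fun x _ => ?_⟩
    have : x = 0 := Subsingleton.elim x 0
    simp [this]
  | succ n ih =>
    intro N
    set π : (Fin (n + 1) → R) →ₗ[R] R := LinearMap.proj 0 with hπ
    -- the image ideal is S-finite
    have h1 : SFinSub S (N.map π) := by
      obtain ⟨J, hJfg, hJle, s, hs, hJ⟩ := h (N.map π)
      exact ⟨J, hJfg, hJle, s, hs, fun x hx => by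
        simpa [smul_eq_mul] using hJ x hx⟩
    -- the kernel part
    have h2 : SFinSub S (N ⊓ LinearMap.ker π) := by
      have key : (Submodule.comap (consZeroLM R n) (N ⊓ LinearMap.ker π)).map
          (consZeroLM R n) = N ⊓ LinearMap.ker π := by
        apply le_antisymm (Submodule.map_comap_le _ _)
        intro x hx
        have hx0 : x 0 = 0 := hx.2
        refine ⟨Fin.tail x, ?_, ?_⟩
        · simp only [SetLike.mem_coe, Submodule.mem_comap]
          show (Fin.cons 0 (Fin.tail x) : Fin (n+1) → R) ∈ _
          rw [← hx0, Fin.cons_self_tail]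
          exact hx
        · show (Fin.cons 0 (Fin.tail x) : Fin (n+1) → R) = x
          rw [← hx0, Fin.cons_self_tail]
      rw [← key]
      exact (ih _).map _
    exact SFinSub.of_map_of_inf_ker π h1 h2

end Aux

/-- Every S-Noetherian commutative ring is S-coherent. -/
theorem stmt12 {R : Type*} [CommRing R] (S : Submonoid R)
    (h : ∀ I : Ideal R, SFiniteIdeal R S I) : SCoherentRing R S := by
  intro I hI
  have : Module.Finite R ↥I := Module.Finite.iff_fg.2 hI
  obtain ⟨n, v, hv⟩ := Module.Finite.exists_fin (R := R) (M := ↥I)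
  set f : (Fin n → R) →ₗ[R] ↥I := Fintype.linearCombination R v with hf
  have hsurj : Function.Surjective f := by
    rw [← LinearMap.range_eq_top, hf, Fintype.range_linearCombination, hv]
  obtain ⟨K₀, hfg, hle, s, hs, hK⟩ := sfinsub_pi h n (LinearMap.ker f)
  exact ⟨n, f, hsurj, K₀, hfg, hle, s, hs, hK⟩
end

section
/- In the trivial extension R = ℤ(+)(ℤ/2ℤ)^(ℕ), the annihilator of the element (2,0) equals 0(+)(ℤ/2ℤ)^(ℕ), and this ideal is not finitely generated; hence the principal ideal ⟨(2,0)⟩ is not a finitely presented R-module. -/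
noncomputable instance : Module ℤᵐᵒᵖ (ℕ →₀ ZMod 2) :=
  Module.compHom _ ((RingEquiv.toOpposite ℤ).symm : ℤᵐᵒᵖ →+* ℤ)

instance : IsCentralScalar ℤ (ℕ →₀ ZMod 2) := ⟨fun _ _ => rfl⟩

local notation "R" => TrivSqZeroExt ℤ (ℕ →₀ ZMod 2)

lemma two_smul_zero (b : ℕ →₀ ZMod 2) : (2 : ℤ) • b = 0 := by
  ext n
  rw [Finsupp.smul_apply, zsmul_eq_mul]
  have h2 : ((2:ℤ):ZMod 2) = 0 := by decide
  rw [h2, zero_mul]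
  rfl

lemma mul_two_eq (x : R) : x * 2 = TrivSqZeroExt.inl (x.fst * 2) := by
  have h2 : (2 : R) = TrivSqZeroExt.inl (2 : ℤ) := by
    ext
    · rw [show (2:R) = ((2:ℕ):R) by norm_num, TrivSqZeroExt.fst_natCast]
      simp
    · rw [show (2:R) = ((2:ℕ):R) by norm_num, TrivSqZeroExt.snd_natCast]
      simp
  rw [h2]
  ext1
  · simp
  · simp only [TrivSqZeroExt.snd_mul, TrivSqZeroExt.snd_inl, TrivSqZeroExt.fst_inl,
      smul_zero, zero_add, TrivSqZeroExt.snd_inl]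
    show ((RingEquiv.toOpposite ℤ).symm (MulOpposite.op (2:ℤ))) • x.snd = 0
    have he : ((RingEquiv.toOpposite ℤ).symm (MulOpposite.op (2:ℤ))) = 2 := rfl
    rw [he]
    exact two_smul_zero x.snd

lemma ann_iff (x : R) : x * 2 = 0 ↔ x.fst = 0 := by
  rw [mul_two_eq]
  constructor
  · intro h
    have h' := congrArg TrivSqZeroExt.fst h
    rw [TrivSqZeroExt.fst_inl, TrivSqZeroExt.fst_zero] at h'
    omega
  · intro h
    rw [h, zero_mul]
    exact TrivSqZeroExt.inl_zero _

/-- The submodule of elements with zero first component and snd support in T. -/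
noncomputable def Ksub (T : Finset ℕ) : Submodule R R where
  carrier := {x | x.fst = 0 ∧ (x.snd).support ⊆ T}
  add_mem' := by
    rintro a b ⟨ha1, ha2⟩ ⟨hb1, hb2⟩
    refine ⟨by simp [ha1, hb1], ?_⟩
    refine (Finsupp.support_add).trans ?_
    exact Finset.union_subset ha2 hb2
  zero_mem' := by simp
  smul_mem' := by
    rintro r x ⟨h1, h2⟩
    refine ⟨by simp [smul_eq_mul, h1], ?_⟩
    have : (r * x).snd = r.fst • x.snd := by
      simp [TrivSqZeroExt.snd_mul, h1]
    rw [smul_eq_mul, this]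
    exact (Finsupp.support_smul).trans h2

lemma ker_not_fg : ¬ (LinearMap.ker (LinearMap.toSpanSingleton R R (2 : R))).FG := by
  rintro ⟨S, hS⟩
  have hker : ∀ x : R, x ∈ LinearMap.ker (LinearMap.toSpanSingleton R R (2 : R)) ↔ x.fst = 0 := by
    intro x
    rw [LinearMap.mem_ker, LinearMap.toSpanSingleton_apply, smul_eq_mul, ann_iff]
  set T : Finset ℕ := S.biUnion (fun s => s.snd.support) with hT
  have hle : Submodule.span R (S : Set R) ≤ Ksub T := by
    rw [Submodule.span_le]
    intro s hs
    have hsk : s ∈ LinearMap.ker (LinearMap.toSpanSingleton R R (2 : R)) := by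
      rw [← hS]; exact Submodule.subset_span hs
    refine ⟨(hker s).mp hsk, ?_⟩
    intro n hn
    exact Finset.mem_biUnion.mpr ⟨s, hs, hn⟩
  obtain ⟨m, hm⟩ := Infinite.exists_notMem_finset T
  set x : R := TrivSqZeroExt.inr (Finsupp.single m (1 : ZMod 2)) with hx
  have hxk : x ∈ LinearMap.ker (LinearMap.toSpanSingleton R R (2 : R)) := by
    rw [hker]; simp [hx]
  rw [← hS] at hxk
  have := hle hxk
  have hsupp : m ∈ (x.snd).support := by
    simp [hx, Finsupp.mem_support_iff]
  exact hm (this.2 hsupp)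


lemma fp_span_singleton_fg_ker {A : Type*} [CommRing A] (a : A)
    (h : Module.FinitePresentation A ↥(Ideal.span {a})) :
    (LinearMap.ker (LinearMap.toSpanSingleton A A a)).FG := by
  have heq : Ideal.span {a} = LinearMap.range (LinearMap.toSpanSingleton A A a) :=
    LinearMap.span_singleton_eq_range A A a
  rw [heq] at h
  have := Module.FinitePresentation.fg_ker
    (LinearMap.toSpanSingleton A A a).rangeRestrict
    (LinearMap.surjective_rangeRestrict _)
  rwa [LinearMap.ker_rangeRestrict] at this

/-- In the trivial extension `R = ℤ(+)(ℤ/2ℤ)^(ℕ)`, the annihilator of `(2,0)` is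
`0(+)(ℤ/2ℤ)^(ℕ)` (the elements with zero first component), this ideal is not
finitely generated, and the principal ideal `⟨(2,0)⟩` is not a finitely presented
`R`-module. -/
theorem stmt16 :
    (∀ x : TrivSqZeroExt ℤ (ℕ →₀ ZMod 2),
      x * (2 : TrivSqZeroExt ℤ (ℕ →₀ ZMod 2)) = 0 ↔ x.fst = 0) ∧
    ¬ (LinearMap.ker (LinearMap.toSpanSingleton (TrivSqZeroExt ℤ (ℕ →₀ ZMod 2))
        (TrivSqZeroExt ℤ (ℕ →₀ ZMod 2)) (2 : TrivSqZeroExt ℤ (ℕ →₀ ZMod 2)))).FG ∧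
    ¬ Module.FinitePresentation (TrivSqZeroExt ℤ (ℕ →₀ ZMod 2))
        ↥(Ideal.span {(2 : TrivSqZeroExt ℤ (ℕ →₀ ZMod 2))}) := by
  refine ⟨ann_iff, ker_not_fg, fun hfp => ker_not_fg (fp_span_singleton_fg_ker (2 : R) hfp)⟩
end
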